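/- Let V be a 3-dimensional real vector space with nondegenerate symmetric bilinear form g, v ∈ V non-null (⟨v,v⟩ ≠ 0), q ≠ 0, and G(a,b) = q(⟨v,a⟩⟨v,b⟩ - (1/2)⟨v,v⟩ g(a,b)) - Λ g(a,b). Then tr(G³) - related combination: (1/3)·tr(G)·tr(G²) - tr(G³) = (4/3) q² ⟨v,v⟩² Λ, where traces are of the g-raised endomorphism. -/

import Mathlib

open Matrix

/-- With `G(a,b) = q(⟨v,a⟩⟨v,b⟩ - (1/2)⟨v,v⟩ g(a,b)) - Λ g(a,b)` and
`G₁, G₂, G₃` the traces of the first three powers of its g-raised endomorphism,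
`(1/3) G₁ G₂ - G₃ = (4/3) q² ⟨v,v⟩² Λ`. -/
theorem stmt12 (g G : Matrix (Fin 3) (Fin 3) ℝ) (hg : g.IsSymm) (hdet : IsUnit g.det)
    (v : Fin 3 → ℝ) (q Λ : ℝ) (hv : v ⬝ᵥ (g *ᵥ v) ≠ 0) (hq : q ≠ 0)
    (hG : ∀ a b, G a b =
      q * ((g *ᵥ v) a * (g *ᵥ v) b - (1/2) * (v ⬝ᵥ (g *ᵥ v)) * g a b) - Λ * g a b) :
    (1/3) * (g⁻¹ * G).trace * ((g⁻¹ * G) ^ 2).trace - ((g⁻¹ * G) ^ 3).trace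
      = (4/3) * q ^ 2 * (v ⬝ᵥ (g *ᵥ v)) ^ 2 * Λ := by
  set w : Fin 3 → ℝ := g *ᵥ v with hw
  set c : ℝ := v ⬝ᵥ w with hc
  set μ : ℝ := q * c / 2 + Λ with hμ
  set A : Matrix (Fin 3) (Fin 3) ℝ := vecMulVec v w with hA
  -- G as a matrix combination
  have hGmat : G = q • vecMulVec w w - μ • g := by
    ext a b
    simp [hG a b, vecMulVec_apply, hμ]
    ring
  have hinv : g⁻¹ * g = 1 := nonsing_inv_mul g hdet
  have hvw : g⁻¹ *ᵥ w = v := by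
    rw [hw, mulVec_mulVec, hinv, one_mulVec]
  have hP : g⁻¹ * G = q • A - μ • 1 := by
    rw [hGmat, Matrix.mul_sub, Matrix.mul_smul, Matrix.mul_smul, hinv]
    congr 1
    congr 1
    ext i j
    simp only [mul_apply, vecMulVec_apply, hA]
    rw [show (∑ k, g⁻¹ i k * (w k * w j)) = (∑ k, g⁻¹ i k * w k) * w j by
      rw [Finset.sum_mul]; apply Finset.sum_congr rfl; intros; ring]
    rw [show (∑ k, g⁻¹ i k * w k) = (g⁻¹ *ᵥ w) i from rfl, hvw]
  have htrA : A.trace = c := by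
    simp [hA, trace, diag, vecMulVec_apply, hc, dotProduct]
  have hA2 : A * A = c • A := by
    ext i j
    simp only [mul_apply, vecMulVec_apply, Matrix.smul_apply, smul_eq_mul, hA]
    rw [show (∑ k, v i * w k * (v k * w j)) = (∑ k, v k * w k) * (v i * w j) by
      rw [Finset.sum_mul]; apply Finset.sum_congr rfl; intros; ring]
    rw [show (∑ k, v k * w k) = v ⬝ᵥ w from rfl, ← hc]
  have htr1 : (1 : Matrix (Fin 3) (Fin 3) ℝ).trace = 3 := by
    simp [trace_one]
  have hP2 : (g⁻¹ * G) ^ 2 = (q^2 * c) • A - (2 * q * μ) • A + (μ^2) • 1 := by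
    rw [pow_two, hP]
    rw [sub_mul, mul_sub, mul_sub, smul_mul_smul_comm, smul_mul_smul_comm,
      smul_mul_smul_comm, smul_mul_smul_comm, hA2, Matrix.mul_one, Matrix.one_mul,
      Matrix.one_mul, smul_smul]
    module
  have hP3 : (g⁻¹ * G) ^ 3 =
      (q^3 * c^2 - 3 * q^2 * c * μ + 3 * q * μ^2) • A - (μ^3) • 1 := by
    rw [pow_succ, hP2, hP]
    rw [Matrix.add_mul, Matrix.sub_mul, mul_sub, mul_sub, mul_sub,
      smul_mul_smul_comm, smul_mul_smul_comm, smul_mul_smul_comm, smul_mul_smul_comm,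
      smul_mul_smul_comm, smul_mul_smul_comm, hA2, Matrix.mul_one, Matrix.one_mul,
      Matrix.one_mul, smul_smul, smul_smul]
    module
  rw [hP3, hP2, hP]
  simp only [trace_sub, trace_add, trace_smul, htrA, htr1, smul_eq_mul]
  rw [hμ]
  ring
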